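/- arXiv:1211.2367 — 2 statements merged into one kernel-verified Lean document; each statement's English description precedes it below -/
import Mathlib

section
/- Let (L₁, …, L_h; w₁, …, w_h) be a vertex hierarchy of height h on the weighted graph G = (V, w₁). Let p = (v₀, v₁, …, v_n) be a walk from s = v₀ to t = v_n in w₁ whose length equals dist_G(s,t), and let 0 ≤ a < b ≤ n be indices such that ℓ(v_a) < ℓ(v_b) and ℓ(v_j) < ℓ(v_a) for every j with a < j < b. Then v_a and v_b are adjacent in w_{ℓ(v_a)}, and w_{ℓ(v_a)} v_a v_b equals the length of the subwalk (v_a, v_{a+1}, …, v_b), which in turn equals dist_G(v_a, v_b). -/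
namespace ISLabel

variable {V : Type*}

/-- Two vertices are adjacent in the weighted graph `w` when they are distinct and
joined by an edge of finite weight. -/
def Adj (w : V → V → ℕ∞) (u v : V) : Prop := u ≠ v ∧ w u v < ⊤

/-- `p` is a walk from `u` to `v` in the weighted graph `w`: a nonempty list of
vertices starting at `u`, ending at `v`, with consecutive vertices adjacent. -/
def IsWalk (w : V → V → ℕ∞) (u v : V) (p : List V) : Prop :=
  p ≠ [] ∧ p.head? = some u ∧ p.getLast? = some v ∧ p.Chain' (Adj w)

/-- The length of a list of vertices: the sum of `f` over consecutive pairs. -/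
def pathLen (f : V → V → ℕ∞) (p : List V) : ℕ∞ :=
  ((p.zip p.tail).map fun e => f e.1 e.2).sum

/-- The distance from `u` to `v` in `w`: the infimum of the lengths of all walks
from `u` to `v` (`⊤` if there is no such walk). -/
noncomputable def wdist (w : V → V → ℕ∞) (u v : V) : ℕ∞ :=
  ⨅ p : {p : List V // IsWalk w u v p}, pathLen w p.1

/-- `I` is an independent set in `w`. -/
def IsIndep (w : V → V → ℕ∞) (I : Set V) : Prop :=
  ∀ u ∈ I, ∀ v ∈ I, ¬ Adj w u v

/-- `w` is a weighted undirected graph: symmetric, and every off-diagonal value is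
either `⊤` (no edge) or a weight `≥ 1`. -/
def IsWGraph (w : V → V → ℕ∞) : Prop :=
  (∀ u v, w u v = w v u) ∧ ∀ u v, u ≠ v → 1 ≤ w u v

/-- `w` is supported on `S`: all weights touching a vertex outside `S` are `⊤`. -/
def SupportedOn (w : V → V → ℕ∞) (S : Set V) : Prop :=
  ∀ u v, u ∉ S ∨ v ∉ S → w u v = ⊤

/-- `VsetOf L i` is the vertex set `V_i = V ∖ (L₁ ∪ … ∪ L_{i-1})`. -/
def VsetOf (L : ℕ → Set V) (i : ℕ) : Set V := {v | ∀ j, 1 ≤ j → j < i → v ∉ L j}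

/-- A vertex hierarchy of height `h ≥ 1` on the weighted graph `w 1`:
pairwise disjoint independent levels `L 1, …, L h` covering `V`, and graphs
`w i` supported on `V_i` obtained by the augmenting-edge construction. -/
structure VertexHierarchy (V : Type*) (h : ℕ) where
  L : ℕ → Set V
  w : ℕ → V → V → ℕ∞
  h_pos : 1 ≤ h
  wgraph : ∀ i, 1 ≤ i → i ≤ h → IsWGraph (w i)
  disj : ∀ i j, 1 ≤ i → i ≤ h → 1 ≤ j → j ≤ h → i ≠ j → ∀ v, v ∈ L i → v ∉ L j
  cover : ∀ v : V, ∃ i, 1 ≤ i ∧ i ≤ h ∧ v ∈ L i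
  supported : ∀ i, 1 ≤ i → i ≤ h → SupportedOn (w i) (VsetOf L i)
  aug : ∀ i, 2 ≤ i → i ≤ h → ∀ u v : V, u ≠ v → u ∈ VsetOf L i → v ∈ VsetOf L i →
    w i u v = min (w (i - 1) u v) (⨅ x ∈ L (i - 1), w (i - 1) u x + w (i - 1) x v)
  indep : ∀ i, 1 ≤ i → i ≤ h → IsIndep (w i) (L i)

/-- The level `ℓ(v)`: the unique `i` with `1 ≤ i ≤ h` and `v ∈ L i`. -/
noncomputable def level {h : ℕ} (H : VertexHierarchy V h) (v : V) : ℕ :=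
  sInf {i | 1 ≤ i ∧ i ≤ h ∧ v ∈ H.L i}

-- auxiliary lemmas
lemma pathLen_nil (f : V → V → ℕ∞) : pathLen f [] = 0 := rfl

lemma pathLen_singleton (f : V → V → ℕ∞) (x : V) : pathLen f [x] = 0 := rfl

lemma pathLen_cons_cons (f : V → V → ℕ∞) (x y : V) (l : List V) :
    pathLen f (x :: y :: l) = f x y + pathLen f (y :: l) := by
  simp [pathLen]

lemma pathLen_lt_top {w : V → V → ℕ∞} : ∀ {p : List V}, p.Chain' (Adj w) → pathLen w p < ⊤
  | [], _ => by simp [pathLen_nil]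
  | [x], _ => by simp [pathLen_singleton]
  | x :: y :: l, h => by
    change List.IsChain _ _ at h
    rw [List.isChain_cons_cons] at h
    rw [pathLen_cons_cons]
    exact ENat.add_lt_top.mpr ⟨h.1.2, pathLen_lt_top h.2⟩

lemma isWalk_singleton (w : V → V → ℕ∞) (u : V) : IsWalk w u u [u] :=
  ⟨by simp, rfl, rfl, List.isChain_singleton u⟩

lemma IsWalk.head_eq {w : V → V → ℕ∞} {u v x : V} {l : List V}
    (h : IsWalk w u v (x :: l)) : x = u := by
  simpa using h.2.1

lemma IsWalk.cons_tail {w : V → V → ℕ∞} {u v : V} {p : List V} (h : IsWalk w u v p) :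
    p = u :: p.tail := by
  cases p with
  | nil => exact absurd rfl h.1
  | cons a l => rw [h.head_eq]; rfl

lemma isWalk_cons_cons {w : V → V → ℕ∞} {u v x y : V} {l : List V} :
    IsWalk w u v (x :: y :: l) ↔ x = u ∧ Adj w x y ∧ IsWalk w y v (y :: l) := by
  constructor
  · rintro ⟨-, h1, h2, h3⟩
    change List.IsChain _ _ at h3
    rw [List.isChain_cons_cons] at h3
    exact ⟨by simpa using h1, h3.1,
      by simp, rfl, by simpa [List.getLast?_cons_cons] using h2, h3.2⟩
  · rintro ⟨rfl, h1, -, -, h2, h3⟩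
    exact ⟨by simp, rfl, by simpa [List.getLast?_cons_cons] using h2,
      List.isChain_cons_cons.mpr ⟨h1, h3⟩⟩

lemma glue {w : V → V → ℕ∞} : ∀ {P : List V} {u x v : V} {Q : List V},
    IsWalk w u x P → IsWalk w x v Q →
    IsWalk w u v (P ++ Q.tail) ∧ pathLen w (P ++ Q.tail) = pathLen w P + pathLen w Q
  | [], u, x, v, Q, hP, _ => absurd rfl hP.1
  | [a], u, x, v, Q, hP, hQ => by
    have ha : a = u := hP.head_eq
    have hx : a = x := by simpa using hP.2.2.1
    have hQ' : Q = x :: Q.tail := hQ.cons_tail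
    have he : [a] ++ Q.tail = Q := by
      simp only [List.singleton_append]; rw [hx]; exact hQ.cons_tail.symm
    rw [he, pathLen_singleton, zero_add]
    exact ⟨ha ▸ hx ▸ hQ, rfl⟩
  | a :: b :: l, u, x, v, Q, hP, hQ => by
    obtain ⟨ha, hadj, hP'⟩ := isWalk_cons_cons.mp hP
    obtain ⟨hw, hl⟩ := glue hP' hQ
    constructor
    · exact isWalk_cons_cons.mpr ⟨ha, hadj, hw⟩
    · show pathLen w (a :: b :: (l ++ Q.tail)) = _
      rw [pathLen_cons_cons, pathLen_cons_cons, add_assoc]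
      congr 1

lemma wdist_le_pathLen {w : V → V → ℕ∞} {u v : V} {p : List V} (h : IsWalk w u v p) :
    wdist w u v ≤ pathLen w p := iInf_le (fun q : {p : List V // IsWalk w u v p} => pathLen w q.1) ⟨p, h⟩

lemma exists_walk_wdist {w : V → V → ℕ∞} {u v : V} (h : wdist w u v ≠ ⊤) :
    ∃ p, IsWalk w u v p ∧ pathLen w p = wdist w u v := by
  have hne : Nonempty {p // IsWalk w u v p} := by
    by_contra hc
    rw [not_nonempty_iff] at hc
    exact h (by rw [wdist, iInf_of_empty])
  have hmem : wdist w u v ∈ Set.range (fun p : {p // IsWalk w u v p} => pathLen w p.1) := by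
    rw [wdist, ← sInf_range]
    exact csInf_mem (Set.range_nonempty _)
  obtain ⟨⟨p, hp⟩, hpe⟩ := hmem
  exact ⟨p, hp, hpe⟩

lemma wdist_triangle (w : V → V → ℕ∞) (u x v : V) :
    wdist w u v ≤ wdist w u x + wdist w x v := by
  rcases eq_or_ne (wdist w u x) ⊤ with h1 | h1
  · simp [h1]
  rcases eq_or_ne (wdist w x v) ⊤ with h2 | h2
  · simp [h2]
  obtain ⟨p, hp, hpe⟩ := exists_walk_wdist h1
  obtain ⟨q, hq, hqe⟩ := exists_walk_wdist h2
  obtain ⟨hw, hl⟩ := glue hp hq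
  calc wdist w u v ≤ pathLen w (p ++ q.tail) := wdist_le_pathLen hw
    _ = _ := by rw [hl, hpe, hqe]

lemma isWalk_take_drop {w : V → V → ℕ∞} {u v : V} {p : List V} (hp : IsWalk w u v p)
    (a b : ℕ) (hab : a ≤ b) (hb : b < p.length) :
    IsWalk w (p[a]'(lt_of_le_of_lt hab hb)) (p[b]) ((p.drop a).take (b - a + 1)) := by
  have hlenQ : ((p.drop a).take (b - a + 1)).length = b - a + 1 := by
    simp only [List.length_take, List.length_drop]
    omega
  have hQne : (p.drop a).take (b - a + 1) ≠ [] := by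
    intro h
    rw [h] at hlenQ
    simp at hlenQ
  refine ⟨hQne, ?_, ?_, (hp.2.2.2.drop a).take _⟩
  · rw [List.head?_eq_head hQne]
    congr 1
    rw [List.head_eq_getElem]
    rw [List.getElem_take, List.getElem_drop]
    simp
  · rw [List.getLast?_eq_getLast hQne]
    congr 1
    rw [List.getLast_eq_getElem]
    simp only [hlenQ, Nat.add_sub_cancel]
    rw [List.getElem_take, List.getElem_drop]
    congr 1
    omega


-- level lemmas
lemma level_mem {h : ℕ} (H : VertexHierarchy V h) (v : V) :
    1 ≤ level H v ∧ level H v ≤ h ∧ v ∈ H.L (level H v) := by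
  have : {i | 1 ≤ i ∧ i ≤ h ∧ v ∈ H.L i}.Nonempty := by
    obtain ⟨i, h1, h2, h3⟩ := H.cover v
    exact ⟨i, h1, h2, h3⟩
  exact Nat.sInf_mem this

lemma level_eq {h : ℕ} (H : VertexHierarchy V h) {v : V} {i : ℕ}
    (h1 : 1 ≤ i) (h2 : i ≤ h) (hv : v ∈ H.L i) : level H v = i := by
  obtain ⟨l1, l2, l3⟩ := level_mem H v
  by_contra hne
  exact H.disj _ i l1 l2 h1 h2 hne v l3 hv

lemma le_level_of_mem_Vset {h : ℕ} (H : VertexHierarchy V h) {v : V} {i : ℕ}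
    (hv : v ∈ VsetOf H.L i) : i ≤ level H v := by
  obtain ⟨l1, -, l3⟩ := level_mem H v
  by_contra hlt
  push_neg at hlt
  exact hv _ l1 hlt l3

lemma adj_mem_Vset {h : ℕ} (H : VertexHierarchy V h) {i : ℕ} {u v : V}
    (h1 : 1 ≤ i) (h2 : i ≤ h) (hadj : Adj (H.w i) u v) :
    u ∈ VsetOf H.L i ∧ v ∈ VsetOf H.L i := by
  constructor
  · by_contra hc
    exact absurd (H.supported i h1 h2 u v (Or.inl hc)) hadj.2.ne
  · by_contra hc
    exact absurd (H.supported i h1 h2 u v (Or.inr hc)) hadj.2.ne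

lemma mem_Vset_succ {L : ℕ → Set V} {v : V} {i : ℕ}
    (hv : v ∈ VsetOf L i) (hvi : v ∉ L i) : v ∈ VsetOf L (i + 1) := by
  intro j hj1 hj2
  rcases Nat.lt_succ_iff_lt_or_eq.mp hj2 with hj | rfl
  · exact hv j hj1 hj
  · exact hvi

-- Claim 2: wdist in the base graph is a lower bound for all the w i.
lemma wdist_le_w {h : ℕ} (H : VertexHierarchy V h) :
    ∀ i, 1 ≤ i → i ≤ h → ∀ u v : V, u ≠ v → wdist (H.w 1) u v ≤ H.w i u v := by
  intro i
  induction i with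
  | zero => omega
  | succ i ih =>
    intro h1 h2 u v huv
    rcases Nat.eq_zero_or_pos i with rfl | hi1
    · rcases eq_or_ne (H.w 1 u v) ⊤ with ht | ht
      · simp [ht]
      have hwalk : IsWalk (H.w 1) u v [u, v] :=
        ⟨by simp, rfl, by simp [List.getLast?_cons_cons],
          List.isChain_cons_cons.mpr ⟨⟨huv, lt_top_iff_ne_top.mpr ht⟩, by simp⟩⟩
      calc wdist (H.w 1) u v ≤ pathLen (H.w 1) [u, v] := wdist_le_pathLen hwalk
        _ = H.w 1 u v := by rw [pathLen_cons_cons, pathLen_singleton, add_zero]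
    · by_cases hu : u ∈ VsetOf H.L (i + 1)
      · by_cases hv : v ∈ VsetOf H.L (i + 1)
        · rw [H.aug (i + 1) (by omega) h2 u v huv hu hv]
          simp only [Nat.add_sub_cancel]
          refine le_min (ih hi1 (by omega) u v huv) (le_iInf₂ fun x hx => ?_)
          have hux : u ≠ x := by rintro rfl; exact hu i hi1 (by omega) hx
          have hxv : x ≠ v := by rintro rfl; exact hv i hi1 (by omega) hx
          calc wdist (H.w 1) u v ≤ wdist (H.w 1) u x + wdist (H.w 1) x v :=
                wdist_triangle _ u x v
            _ ≤ H.w i u x + H.w i x v :=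
                add_le_add (ih hi1 (by omega) u x hux) (ih hi1 (by omega) x v hxv)
        · rw [H.supported (i + 1) h1 h2 u v (Or.inr hv)]; exact le_top
      · rw [H.supported (i + 1) h1 h2 u v (Or.inl hu)]; exact le_top

-- The lowering lemma: removing level-i vertices from a walk.
lemma lower {h : ℕ} (H : VertexHierarchy V h) {i : ℕ} (hi1 : 1 ≤ i) (hih : i + 1 ≤ h) :
    ∀ n (W : List V) (A B : V), W.length ≤ n → IsWalk (H.w i) A B W →
      A ∉ H.L i → B ∉ H.L i →
    ∃ W', IsWalk (H.w (i + 1)) A B W' ∧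
      pathLen (H.w (i + 1)) W' ≤ pathLen (H.w i) W ∧ ∀ y ∈ W', y ∈ W := by
  intro n
  induction n with
  | zero =>
    intro W A B hn hW _ _
    exact absurd (List.length_eq_zero_iff.mp (Nat.le_zero.mp hn)) hW.1
  | succ n ih =>
    intro W A B hn hW hA hB
    rcases W with _ | ⟨a, W1⟩
    · exact absurd rfl hW.1
    have ha : a = A := hW.head_eq
    subst ha
    rcases W1 with _ | ⟨y, W2⟩
    · -- singleton: A = B
      have hab : a = B := by simpa using hW.2.2.1
      subst hab
      exact ⟨[a], isWalk_singleton _ a, le_rfl, by simp⟩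
    obtain ⟨-, hadj, hW'⟩ := isWalk_cons_cons.mp hW
    by_cases hy : y ∈ H.L i
    · -- y is at level i: it must be removed
      have hyB : y ≠ B := fun e => hB (e ▸ hy)
      rcases W2 with _ | ⟨z, W3⟩
      · -- walk [a, y] : then y = B, contradiction
        have : y = B := by simpa using hW'.2.2.1
        exact absurd this hyB
      obtain ⟨-, hadj2, hW''⟩ := isWalk_cons_cons.mp hW'
      have hz : z ∉ H.L i := fun hz => H.indep i hi1 (by omega) y hy z hz hadj2
      by_cases hzA : z = a
      · -- shortcut: drop the detour through y
        subst hzA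
        obtain ⟨W', h1, h2, h3⟩ := ih (z :: W3) z B (by simp at hn ⊢; omega) hW'' hA hB
        refine ⟨W', h1, ?_, fun y' hy' => by simp [h3 y' hy']⟩
        calc pathLen (H.w (i + 1)) W' ≤ pathLen (H.w i) (z :: W3) := h2
          _ ≤ H.w i z y + (H.w i y z + pathLen (H.w i) (z :: W3)) :=
              le_add_left (le_add_left le_rfl)
          _ = pathLen (H.w i) (z :: y :: z :: W3) := by
              rw [pathLen_cons_cons, pathLen_cons_cons]
      · -- augmenting edge from a to z
        obtain ⟨W', h1, h2, h3⟩ := ih (z :: W3) z B (by simp at hn ⊢; omega) hW'' hz hB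
        have haz : a ≠ z := fun e => hzA e.symm
        have hVa : a ∈ VsetOf H.L (i + 1) :=
          mem_Vset_succ (adj_mem_Vset H hi1 (by omega) hadj).1 hA
        have hVz : z ∈ VsetOf H.L (i + 1) :=
          mem_Vset_succ (adj_mem_Vset H hi1 (by omega) hadj2).2 hz
        have haug := H.aug (i + 1) (by omega) hih a z haz hVa hVz
        have hle : H.w (i + 1) a z ≤ H.w i a y + H.w i y z := by
          rw [haug]
          simp only [Nat.add_sub_cancel]
          exact le_trans (min_le_right _ _) (iInf₂_le y hy)
        have hADJ : Adj (H.w (i + 1)) a z :=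
          ⟨haz, lt_of_le_of_lt hle (ENat.add_lt_top.mpr ⟨hadj.2, hadj2.2⟩)⟩
        have hW'tail : W' = z :: W'.tail := h1.cons_tail
        refine ⟨a :: W', ?_, ?_, ?_⟩
        · rw [hW'tail]
          exact isWalk_cons_cons.mpr ⟨rfl, hADJ, hW'tail ▸ h1⟩
        · rw [hW'tail, pathLen_cons_cons, ← hW'tail, pathLen_cons_cons,
            pathLen_cons_cons, ← add_assoc]
          exact add_le_add hle h2
        · intro y' hy'
          rcases List.mem_cons.mp hy' with rfl | hy'
          · simp
          · simp [h3 y' hy']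
    · -- y survives to level i+1
      obtain ⟨W', h1, h2, h3⟩ := ih (y :: W2) y B (by simp at hn ⊢; omega) hW' hy hB
      have hVa : a ∈ VsetOf H.L (i + 1) :=
        mem_Vset_succ (adj_mem_Vset H hi1 (by omega) hadj).1 hA
      have hVy : y ∈ VsetOf H.L (i + 1) :=
        mem_Vset_succ (adj_mem_Vset H hi1 (by omega) hadj).2 hy
      have haug := H.aug (i + 1) (by omega) hih a y hadj.1 hVa hVy
      have hle : H.w (i + 1) a y ≤ H.w i a y := by
        rw [haug]
        simp only [Nat.add_sub_cancel]
        exact min_le_left _ _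
      have hADJ : Adj (H.w (i + 1)) a y := ⟨hadj.1, lt_of_le_of_lt hle hadj.2⟩
      have hW'tail : W' = y :: W'.tail := h1.cons_tail
      refine ⟨a :: W', ?_, ?_, ?_⟩
      · rw [hW'tail]
        exact isWalk_cons_cons.mpr ⟨rfl, hADJ, hW'tail ▸ h1⟩
      · rw [hW'tail, pathLen_cons_cons, ← hW'tail, pathLen_cons_cons]
        exact add_le_add hle h2
      · intro y' hy'
        rcases List.mem_cons.mp hy' with rfl | hy'
        · simp
        · simp [h3 y' hy']


/-- on a shortest walk, consecutive "level-record" vertices are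
adjacent in the graph at the lower level, with exact weight. -/
theorem shortest_walk_record_edge [Fintype V] {h : ℕ} (H : VertexHierarchy V h)
    (s t : V) (p : List V) (hp : IsWalk (H.w 1) s t p)
    (hlen : pathLen (H.w 1) p = wdist (H.w 1) s t)
    (a b : ℕ) (hab : a < b) (hb : b < p.length)
    (hlv : level H (p.getD a s) < level H (p.getD b s))
    (hmid : ∀ j, a < j → j < b → level H (p.getD j s) < level H (p.getD a s)) :
    Adj (H.w (level H (p.getD a s))) (p.getD a s) (p.getD b s) ∧
    H.w (level H (p.getD a s)) (p.getD a s) (p.getD b s) =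
      pathLen (H.w 1) ((p.drop a).take (b - a + 1)) ∧
    pathLen (H.w 1) ((p.drop a).take (b - a + 1)) =
      wdist (H.w 1) (p.getD a s) (p.getD b s) := by
  have ha : a < p.length := lt_trans hab hb
  have hplen : p.length ≠ 0 := fun e => hp.1 (List.length_eq_zero_iff.mp e)
  have hga : p.getD a s = p[a] := List.getD_eq_getElem p s ha
  have hgb : p.getD b s = p[b] := List.getD_eq_getElem p s hb
  rw [hga, hgb] at hlv ⊢
  set w1 := H.w 1 with hw1
  set A := p[a] with hA
  set B := p[b] with hB
  set Q := (p.drop a).take (b - a + 1) with hQdef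
  -- endpoints of p
  have hp0 : p[0]'(Nat.pos_of_ne_zero hplen) = s := by
    have h0 := hp.2.1; rw [List.head?_eq_head hp.1] at h0
    simpa [List.head_eq_getElem] using h0
  have hpl : p[p.length - 1]'(by omega) = t := by
    have h0 := hp.2.2.1; rw [List.getLast?_eq_getLast hp.1] at h0
    simpa [List.getLast_eq_getElem] using h0
  -- the three pieces of p
  have hQwalk : IsWalk w1 A B Q := isWalk_take_drop hp a b hab.le hb
  have hPwalk : IsWalk w1 s A (p.take (a + 1)) := by
    have h0 := isWalk_take_drop hp 0 a (Nat.zero_le a) ha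
    simpa [hp0] using h0
  have hRwalk : IsWalk w1 B t (p.drop b) := by
    have h0 := isWalk_take_drop hp b (p.length - 1) (by omega) (by omega)
    rw [hpl] at h0
    have he : (p.drop b).take (p.length - 1 - b + 1) = p.drop b := by
      apply List.take_of_length_le
      simp only [List.length_drop]
      omega
    rwa [he] at h0
  -- decomposition identity
  have hid : p.take (a + 1) ++ Q.tail ++ (p.drop b).tail = p := by
    have h1 : Q.tail = (p.drop (a + 1)).take (b - a) := by
      rw [hQdef, List.drop_eq_getElem_cons ha, List.take_succ_cons, List.tail_cons]
    have h2 : p.take (a + 1) ++ (p.drop (a + 1)).take (b - a) = p.take (b + 1) := by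
      rw [← List.take_add]
      congr 1
      omega
    rw [h1, List.tail_drop, h2]
    have h3 : p.drop b = p[b] :: p.drop (b + 1) := List.drop_eq_getElem_cons hb
    rw [List.take_append_drop]
  have hsum : pathLen w1 p =
      pathLen w1 (p.take (a + 1)) + pathLen w1 Q + pathLen w1 (p.drop b) := by
    have g1 := glue hPwalk hQwalk
    have g2 := glue g1.1 hRwalk
    rw [g1.2, hid] at g2
    exact g2.2
  -- any walk from A to B is at least as long as Q
  have hsplice : ∀ Q', IsWalk w1 A B Q' → pathLen w1 Q ≤ pathLen w1 Q' := by
    intro Q' hQ'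
    have g1 := glue hPwalk hQ'
    have g2 := glue g1.1 hRwalk
    have hw : wdist w1 s t ≤ pathLen w1 (p.take (a + 1) ++ Q'.tail ++ (p.drop b).tail) :=
      wdist_le_pathLen g2.1
    rw [g2.2, g1.2, ← hlen, hsum] at hw
    have hPfin : pathLen w1 (p.take (a + 1)) ≠ ⊤ := (pathLen_lt_top hPwalk.2.2.2).ne
    have hRfin : pathLen w1 (p.drop b) ≠ ⊤ := (pathLen_lt_top hRwalk.2.2.2).ne
    have h0 := (WithTop.add_le_add_iff_right hRfin).mp hw
    exact (WithTop.add_le_add_iff_left hPfin).mp h0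
  have hQdist : pathLen w1 Q = wdist w1 A B :=
    le_antisymm (le_iInf fun q => hsplice q.1 q.2) (wdist_le_pathLen hQwalk)
  -- levels
  have hAB : A ≠ B := fun e => by rw [e] at hlv; exact lt_irrefl _ hlv
  obtain ⟨hl1, hlh, hmemA⟩ := level_mem H A
  set ℓ := level H A with hldef
  have hQmem : ∀ y ∈ Q, y = A ∨ y = B ∨ level H y < ℓ := by
    intro y hy
    obtain ⟨k, hk, hky⟩ := List.getElem_of_mem hy
    have hkQ : Q.length = b - a + 1 := by
      simp only [hQdef, List.length_take, List.length_drop]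
      omega
    have hkb : a + k ≤ b := by rw [hkQ] at hk; omega
    have hQk : Q[k]'hk = p[a + k]'(by omega) := by
      simp only [hQdef]
      rw [List.getElem_take, List.getElem_drop]
    rcases Nat.eq_zero_or_pos k with rfl | hk0
    · left; rw [← hky, hQk]; simp [hA]
    rcases eq_or_lt_of_le hkb with he | hlt
    · right; left; rw [← hky, hQk, hB]
      congr 1
    · right; right
      have hm := hmid (a + k) (by omega) hlt
      rw [List.getD_eq_getElem p s (by omega), hga] at hm
      rw [← hky, hQk]
      exact hm
  -- iterate the lowering construction up to level ℓ
  have main : ∀ i, 1 ≤ i → i ≤ ℓ →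
      ∃ W, IsWalk (H.w i) A B W ∧ pathLen (H.w i) W ≤ pathLen w1 Q ∧
        ∀ y ∈ W, y = A ∨ y = B ∨ level H y < ℓ := by
    intro i
    induction i with
    | zero => omega
    | succ i ih =>
      intro h1 h2
      rcases Nat.eq_zero_or_pos i with rfl | hi1
      · exact ⟨Q, hQwalk, le_rfl, hQmem⟩
      · obtain ⟨W, hW, hWlen, hWmem⟩ := ih hi1 (by omega)
        have hAL : A ∉ H.L i := fun hx => by
          have := level_eq H hi1 (by omega) hx
          omega
        have hBL : B ∉ H.L i := fun hx => by
          have := level_eq H hi1 (by omega) hx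
          omega
        obtain ⟨W', h1', h2', h3'⟩ :=
          lower H hi1 (by omega) W.length W A B le_rfl hW hAL hBL
        exact ⟨W', h1', h2'.trans hWlen, fun y hy => hWmem y (h3' y hy)⟩
  obtain ⟨W, hWwalk, hWlen, hWmem⟩ := main ℓ hl1 le_rfl
  -- at level ℓ the walk must be the single edge A-B
  have hWtail := hWwalk.cons_tail
  rcases hW2 : W.tail with _ | ⟨c, rest⟩
  · rw [hW2] at hWtail
    rw [hWtail] at hWwalk
    have : A = B := by simpa using hWwalk.2.2.1
    exact absurd this hAB
  · rw [hW2] at hWtail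
    rw [hWtail] at hWwalk hWlen hWmem
    obtain ⟨-, hADJ, hcwalk⟩ := isWalk_cons_cons.mp hWwalk
    have hcV : c ∈ VsetOf H.L ℓ := (adj_mem_Vset H hl1 hlh hADJ).2
    have hclev : ℓ ≤ level H c := le_level_of_mem_Vset H hcV
    have hcB : c = B := by
      rcases hWmem c (by simp) with h0 | h0 | h0
      · exact absurd h0.symm hADJ.1
      · exact h0
      · omega
    subst hcB
    have hub : H.w ℓ A B ≤ pathLen w1 Q := by
      calc H.w ℓ A B ≤ H.w ℓ A B + pathLen (H.w ℓ) (B :: rest) := le_self_add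
        _ = pathLen (H.w ℓ) (A :: B :: rest) := (pathLen_cons_cons _ _ _ _).symm
        _ ≤ pathLen w1 Q := hWlen
    have hlb : pathLen w1 Q ≤ H.w ℓ A B := by
      rw [hQdist]
      exact wdist_le_w H ℓ hl1 hlh A B hAB
    exact ⟨hADJ, le_antisymm hub hlb, hQdist⟩

end ISLabel
end

section
/- Let (L₁, …, L_{k−1}, V_{G_k}; w₁, …, w_k) be a k-level vertex hierarchy on the weighted graph G = (V, w₁). Suppose V_{G_k} ≠ ∅ and G is connected, i.e. dist_G(u,v) < ⊤ for all u, v ∈ V. Then every vertex v ∈ V has an ancestor in V_{G_k}, i.e. Anc(v) ∩ V_{G_k} ≠ ∅. -/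
namespace ISLabel

variable {V : Type*}

/-- A `k`-level vertex hierarchy (`k ≥ 2`) on the weighted graph `w 1`: like a
vertex hierarchy of height `k`, except that the top vertex set
`V_{G_k} = VsetOf L k` is not required to be independent in `w k`. -/
structure KLevelHierarchy (V : Type*) (k : ℕ) where
  L : ℕ → Set V
  w : ℕ → V → V → ℕ∞
  two_le : 2 ≤ k
  wgraph : ∀ i, 1 ≤ i → i ≤ k → IsWGraph (w i)
  disj : ∀ i j, 1 ≤ i → i < k → 1 ≤ j → j < k → i ≠ j → ∀ v, v ∈ L i → v ∉ L j
  supported : ∀ i, 1 ≤ i → i ≤ k → SupportedOn (w i) (VsetOf L i)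
  aug : ∀ i, 2 ≤ i → i ≤ k → ∀ u v : V, u ≠ v → u ∈ VsetOf L i → v ∈ VsetOf L i →
    w i u v = min (w (i - 1) u v) (⨅ x ∈ L (i - 1), w (i - 1) u x + w (i - 1) x v)
  indep : ∀ i, 1 ≤ i → i < k → IsIndep (w i) (L i)

/-- The level of a vertex: the unique `i < k` with `v ∈ L i`, and `k` for vertices
of the top vertex set `V_{G_k}`. -/
noncomputable def klevel {k : ℕ} (H : KLevelHierarchy V k) (v : V) : ℕ :=
  sInf {i | (1 ≤ i ∧ i < k ∧ v ∈ H.L i) ∨ i = k}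

/-- One step of an ascending sequence in a `k`-level vertex hierarchy. -/
def kAscStep {k : ℕ} (H : KLevelHierarchy V k) (a b : V) : Prop :=
  klevel H a < klevel H b ∧ Adj (H.w (klevel H a)) a b

/-- `p` is an ascending sequence from `v` to `u`. -/
def kIsAscending {k : ℕ} (H : KLevelHierarchy V k) (v u : V) (p : List V) : Prop :=
  p ≠ [] ∧ p.head? = some v ∧ p.getLast? = some u ∧ p.Chain' (kAscStep H)

/-- The set of ancestors of `v`. -/
def kAnc {k : ℕ} (H : KLevelHierarchy V k) (v : V) : Set V :=
  {u | ∃ p, kIsAscending H v u p}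

/-- `d(v,u)` in a `k`-level vertex hierarchy. -/
noncomputable def kAncDist {k : ℕ} (H : KLevelHierarchy V k) (v u : V) : ℕ∞ :=
  ⨅ p : {p : List V // kIsAscending H v u p},
    pathLen (fun a b => H.w (klevel H a) a b) p.1


lemma adj_symm' {w : V → V → ℕ∞} (hw : IsWGraph w) {u v : V} (h : Adj w u v) : Adj w v u :=
  ⟨h.1.symm, by rw [hw.1 v u]; exact h.2⟩

lemma adj_mem' {w : V → V → ℕ∞} {S : Set V} (hs : SupportedOn w S) {u v : V}
    (h : Adj w u v) : u ∈ S ∧ v ∈ S := by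
  constructor <;> by_contra hc
  · exact h.2.ne (hs u v (Or.inl hc))
  · exact h.2.ne (hs u v (Or.inr hc))

lemma rtg_of_walk {w : V → V → ℕ∞} : ∀ {u v : V} (p : List V), IsWalk w u v p →
    Relation.ReflTransGen (Adj w) u v := by
  intro u v p
  induction p generalizing u with
  | nil => intro h; exact absurd rfl h.1
  | cons a rest ih =>
    rintro ⟨-, hh, hl, hc⟩
    obtain rfl : a = u := by simpa using hh
    cases rest with
    | nil =>
      obtain rfl : a = v := by simpa using hl
      exact Relation.ReflTransGen.refl
    | cons b rest' =>
      replace hc := List.isChain_cons_cons.mp hc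
      have hw : IsWalk w b v (b :: rest') :=
        ⟨by simp, rfl, by rwa [List.getLast?_cons_cons] at hl, hc.2⟩
      exact Relation.ReflTransGen.head hc.1 (ih hw)

lemma exists_walk_of_lt_top {w : V → V → ℕ∞} {u v : V} (h : wdist w u v < ⊤) :
    ∃ p, IsWalk w u v p := by
  by_contra hc
  push_neg at hc
  have : IsEmpty {p : List V // IsWalk w u v p} := ⟨fun p => hc p.1 p.2⟩
  rw [wdist, iInf_of_empty] at h
  exact lt_irrefl _ h

lemma mem_vset_succ {L : ℕ → Set V} {i : ℕ} (hi : 2 ≤ i) {v : V} :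
    v ∈ VsetOf L i ↔ v ∈ VsetOf L (i-1) ∧ v ∉ L (i-1) := by
  constructor
  · intro h
    exact ⟨fun j h1 h2 => h j h1 (by omega), h (i-1) (by omega) (by omega)⟩
  · rintro ⟨h1, h2⟩ j hj1 hj2
    by_cases hje : j = i - 1
    · exact hje ▸ h2
    · exact h1 j hj1 (by omega)

lemma rtg_lift {k : ℕ} (H : KLevelHierarchy V k) {i : ℕ} (h2 : 2 ≤ i) (hk : i ≤ k)
    {v : V} (hv : v ∈ VsetOf H.L i) :
    ∀ {u : V}, Relation.ReflTransGen (Adj (H.w (i-1))) u v →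
      (u ∈ VsetOf H.L i → Relation.ReflTransGen (Adj (H.w i)) u v) ∧
      (u ∈ H.L (i-1) → ∀ c ∈ VsetOf H.L i, Adj (H.w (i-1)) c u →
        Relation.ReflTransGen (Adj (H.w i)) c v) := by
  have h1i : 1 ≤ i - 1 := by omega
  have hik : i - 1 ≤ k := by omega
  have hsup := H.supported (i-1) h1i hik
  have hind := H.indep (i-1) h1i (by omega)
  have step1 : ∀ a b : V, a ∈ VsetOf H.L i → b ∈ VsetOf H.L i → a ≠ b →
      H.w (i-1) a b < ⊤ → Adj (H.w i) a b := by
    intro a b ha hb hne hlt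
    refine ⟨hne, ?_⟩
    rw [H.aug i h2 hk a b hne ha hb]
    exact lt_of_le_of_lt (min_le_left _ _) hlt
  have step2 : ∀ a b x : V, a ∈ VsetOf H.L i → b ∈ VsetOf H.L i → a ≠ b →
      x ∈ H.L (i-1) → H.w (i-1) a x < ⊤ → H.w (i-1) x b < ⊤ → Adj (H.w i) a b := by
    intro a b x ha hb hne hx hx1 hx2
    refine ⟨hne, ?_⟩
    rw [H.aug i h2 hk a b hne ha hb]
    refine lt_of_le_of_lt (le_trans (min_le_right _ _) (iInf₂_le x hx)) ?_
    exact WithTop.add_lt_top.mpr ⟨hx1, hx2⟩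
  have hmem : ∀ a : V, a ∈ VsetOf H.L (i-1) → a ∉ H.L (i-1) → a ∈ VsetOf H.L i :=
    fun a ha hb => (mem_vset_succ h2).mpr ⟨ha, hb⟩
  intro u h
  induction h using Relation.ReflTransGen.head_induction_on with
  | refl =>
    constructor
    · intro _; exact Relation.ReflTransGen.refl
    · intro _ c hc hadj
      exact Relation.ReflTransGen.single (step1 c v hc hv hadj.1 hadj.2)
  | @head a x hadj hrt ih =>
    constructor
    · intro ha
      have hx' : x ∈ VsetOf H.L (i-1) := (adj_mem' hsup hadj).2
      by_cases hxL : x ∈ H.L (i-1)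
      · exact ih.2 hxL a ha hadj
      · have hxV : x ∈ VsetOf H.L i := hmem x hx' hxL
        exact Relation.ReflTransGen.head (step1 a x ha hxV hadj.1 hadj.2) (ih.1 hxV)
    · intro haL c hc hcadj
      have hxL : x ∉ H.L (i-1) := fun hx => hind a haL x hx hadj
      have hx' : x ∈ VsetOf H.L (i-1) := (adj_mem' hsup hadj).2
      have hxV : x ∈ VsetOf H.L i := hmem x hx' hxL
      by_cases hcx : c = x
      · exact hcx ▸ ih.1 hxV
      · exact Relation.ReflTransGen.head (step2 c x a hc hxV hcx haL hcadj.2 hadj.2)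
          (ih.1 hxV)

lemma rtg_all {k : ℕ} (H : KLevelHierarchy V k)
    (hconn : ∀ u v : V, wdist (H.w 1) u v < ⊤) :
    ∀ i, 1 ≤ i → i ≤ k → ∀ u v : V, u ∈ VsetOf H.L i → v ∈ VsetOf H.L i →
      Relation.ReflTransGen (Adj (H.w i)) u v := by
  intro i
  induction i with
  | zero => intro h1; exact absurd h1 (by omega)
  | succ n ih =>
    intro h1 hk u v hu hv
    rcases Nat.lt_or_ge n 1 with hn | hn
    · obtain rfl : n = 0 := by omega
      obtain ⟨p, hp⟩ := exists_walk_of_lt_top (hconn u v)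
      exact rtg_of_walk p hp
    · have h2 : 2 ≤ n + 1 := by omega
      have base := ih hn (by omega) u v (fun j a b => hu j a (by omega))
        (fun j a b => hv j a (by omega))
      exact (rtg_lift H h2 hk (fun j a b => hv j a b) base).1 hu

lemma klevel_mem {k : ℕ} (H : KLevelHierarchy V k) (v : V) :
    (1 ≤ klevel H v ∧ klevel H v < k ∧ v ∈ H.L (klevel H v)) ∨ klevel H v = k := by
  have h : klevel H v ∈ {i | (1 ≤ i ∧ i < k ∧ v ∈ H.L i) ∨ i = k} :=
    Nat.sInf_mem ⟨k, Or.inr rfl⟩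
  exact h

lemma klevel_le {k : ℕ} (H : KLevelHierarchy V k) (v : V) : klevel H v ≤ k :=
  Nat.sInf_le (Or.inr rfl)

lemma klevel_eq_of_mem {k : ℕ} (H : KLevelHierarchy V k) {v : V} {i : ℕ}
    (h1 : 1 ≤ i) (h2 : i < k) (h : v ∈ H.L i) : klevel H v = i := by
  refine le_antisymm (Nat.sInf_le (Or.inl ⟨h1, h2, h⟩)) (le_csInf ⟨k, Or.inr rfl⟩ ?_)
  rintro j (⟨hj1, hj2, hjm⟩ | rfl)
  · by_contra hlt
    exact H.disj i j h1 h2 hj1 hj2 (by omega) v h hjm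
  · omega

lemma top_of_klevel_eq {k : ℕ} (H : KLevelHierarchy V k) {v : V}
    (h : klevel H v = k) : v ∈ VsetOf H.L k := by
  intro j hj1 hj2 hmem
  have := klevel_eq_of_mem H hj1 hj2 hmem
  omega

lemma mem_vset_klevel {k : ℕ} (H : KLevelHierarchy V k) (v : V) :
    v ∈ VsetOf H.L (klevel H v) := by
  intro j hj1 hj2 hmem
  have := klevel_eq_of_mem H hj1 (lt_of_lt_of_le hj2 (klevel_le H v)) hmem
  omega

lemma top_self {k : ℕ} (H : KLevelHierarchy V k) {v : V} (h : klevel H v = k) :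
    (kAnc H v ∩ VsetOf H.L k).Nonempty :=
  ⟨v, ⟨⟨[v], by simp, rfl, by simp, List.isChain_singleton _⟩, top_of_klevel_eq H h⟩⟩


/-- in a connected graph with nonempty top vertex set, every vertex
has an ancestor in the top vertex set. -/
theorem exists_top_ancestor [Fintype V] {k : ℕ} (H : KLevelHierarchy V k)
    (hne : (VsetOf H.L k).Nonempty)
    (hconn : ∀ u v : V, wdist (H.w 1) u v < ⊤) :
    ∀ v : V, (kAnc H v ∩ VsetOf H.L k).Nonempty := by
  suffices key : ∀ n (v : V), k - klevel H v ≤ n → (kAnc H v ∩ VsetOf H.L k).Nonempty by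
    intro v; exact key k v (by omega)
  intro n
  induction n with
  | zero =>
    intro v hv
    have hk := klevel_le H v
    exact top_self H (by omega)
  | succ n ih =>
    intro v hv
    by_cases hvk : klevel H v = k
    · exact top_self H hvk
    · have hk := klevel_le H v
      rcases klevel_mem H v with ⟨h1, h2, hL⟩ | hkk
      swap
      · exact absurd hkk hvk
      have hvV : v ∈ VsetOf H.L (klevel H v) := mem_vset_klevel H v
      obtain ⟨t, ht⟩ := hne
      have htV : t ∈ VsetOf H.L (klevel H v) := fun j a b => ht j a (by omega)
      have hne' : v ≠ t := fun he => ht (klevel H v) h1 h2 (he ▸ hL)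
      have hrt := rtg_all H hconn (klevel H v) h1 (le_of_lt h2) v t hvV htV
      rcases Relation.ReflTransGen.cases_head hrt with he | ⟨u, hadj, hrt'⟩
      · exact absurd he hne'
      · have hsupi := H.supported (klevel H v) h1 (by omega)
        have huV : u ∈ VsetOf H.L (klevel H v) := (adj_mem' hsupi hadj).2
        have huLi : u ∉ H.L (klevel H v) := fun hu =>
          H.indep (klevel H v) h1 h2 v hL u hu hadj
        have hlev : klevel H v < klevel H u := by
          rcases klevel_mem H u with ⟨hj1, hj2, hjm⟩ | hk'
          · by_contra hle
            push_neg at hle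
            rcases Nat.lt_or_ge (klevel H u) (klevel H v) with hlt | hge
            · exact huV _ hj1 hlt hjm
            · have heq : klevel H u = klevel H v := by omega
              exact huLi (heq ▸ hjm)
          · omega
        obtain ⟨t', ⟨p, hpne, hph, hpl, hpc⟩, ht'⟩ := ih u (by omega)
        cases p with
        | nil => exact absurd rfl hpne
        | cons a p' =>
          obtain rfl : a = u := by simpa using hph
          refine ⟨t', ⟨⟨v :: a :: p', by simp, rfl, ?_, ?_⟩, ht'⟩⟩
          · rwa [List.getLast?_cons_cons]
          · exact List.isChain_cons_cons.mpr ⟨⟨hlev, hadj⟩, hpc⟩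

end ISLabel
end
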